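/- Let κ ∈ (0,1) and define γ(β) = (2 − β² − 2βκ)/(1 − β²(1+κ²)) when 1 − β² − βκ > 0, and γ(β) = 1/(1−β²) otherwise, for β ∈ [0,1). Then γ attains its minimum over [0,1) at β̄ = κ/(1+κ²), with minimal value γ(β̄) = 1 + 1/(1+κ²). -/
import Mathlib


/-- `γ(β)` as defined in the paper, for a fixed `κ`. -/
noncomputable def gammaFun (κ β : ℝ) : ℝ :=
  if 0 < 1 - β ^ 2 - β * κ then (2 - β ^ 2 - 2 * β * κ) / (1 - β ^ 2 * (1 + κ ^ 2))
  else 1 / (1 - β ^ 2)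

/-- for `κ ∈ (0,1)`, `γ` attains its minimum over `[0,1)` at
`β̄ = κ/(1+κ²)`, with minimal value `1 + 1/(1+κ²)`. -/
theorem stmt13 (κ : ℝ) (hκ : κ ∈ Set.Ioo (0 : ℝ) 1) :
    κ / (1 + κ ^ 2) ∈ Set.Ico (0 : ℝ) 1 ∧
    (∀ β ∈ Set.Ico (0 : ℝ) 1, gammaFun κ (κ / (1 + κ ^ 2)) ≤ gammaFun κ β) ∧
    gammaFun κ (κ / (1 + κ ^ 2)) = 1 + 1 / (1 + κ ^ 2) := by
  obtain ⟨hκ0, hκ1⟩ := hκ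
  have hd : (0:ℝ) < 1 + κ ^ 2 := by positivity
  have hbar : (0:ℝ) < 1 - (κ / (1 + κ ^ 2)) ^ 2 - (κ / (1 + κ ^ 2)) * κ := by
    have : 1 - (κ / (1 + κ ^ 2)) ^ 2 - (κ / (1 + κ ^ 2)) * κ = 1 / (1 + κ ^ 2) ^ 2 := by
      field_simp; ring
    rw [this]; positivity
  have hval : gammaFun κ (κ / (1 + κ ^ 2)) = 1 + 1 / (1 + κ ^ 2) := by
    rw [gammaFun, if_pos hbar]
    rw [div_eq_iff]
    · field_simp; ring
    · have : 1 - (κ / (1 + κ ^ 2)) ^ 2 * (1 + κ ^ 2) = 1 / (1 + κ ^ 2) := by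
        field_simp; ring
      rw [this]; positivity
  refine ⟨⟨by positivity, by rw [div_lt_one hd]; nlinarith⟩, ?_, hval⟩
  intro β hβ
  obtain ⟨hβ0, hβ1⟩ := hβ
  rw [hval, gammaFun]
  have hm : 1 + 1 / (1 + κ ^ 2) = (2 + κ ^ 2) / (1 + κ ^ 2) := by field_simp; ring
  rw [hm]
  split_ifs with h
  · -- denominator positive
    have hbκ : β * κ < 1 := by nlinarith
    have hden : 0 < 1 - β ^ 2 * (1 + κ ^ 2) := by nlinarith [mul_nonneg hβ0 hκ0.le]
    rw [div_le_div_iff₀ hd hden]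
    nlinarith [sq_nonneg (κ - β * (1 + κ ^ 2))]
  · push_neg at h
    have hβ2 : β ^ 2 < 1 := by nlinarith
    have hden : 0 < 1 - β ^ 2 := by linarith
    rw [div_le_div_iff₀ hd hden]
    have hk2 : 1 - β ^ 2 ≤ κ * β := by nlinarith
    have hsq : (1 - β ^ 2) * (1 - β ^ 2) ≤ κ * β * (κ * β) :=
      mul_le_mul hk2 hk2 hden.le (by positivity)
    nlinarith [sq_nonneg (β ^ 2)]
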